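/- In the setting of the Grobman-Hartman theorem with nonuniform $(h,k,\mu,\nu)$-dichotomy, Lipschitz perturbation constant $\gamma$ satisfying $K\gamma(1/|a|+1/b)<1$, and bound constant $\alpha$, the operator $J$ defined on the space $\Omega_3 = \{z:\mathbb{R}\to X \text{ continuous}: \sup_t\|z(t)\|\le K\alpha(1/|a|+1/b)\}$ by $(Jz)(t)=\int_{-\infty}^t T(t,\tau)P(\tau)f(\tau,Y(\tau)+z(\tau))d\tau - \int_t^\infty T(t,\tau)Q(\tau)f(\tau,Y(\tau)+z(\tau))d\tau$ (for a fixed solution $Y$ of the linear system) maps $\Omega_3$ into itself and is a contraction with constant $K\gamma(1/|a|+1/b)$; hence it has a unique fixed point $l\in\Omega_3$. -/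

import Mathlib

open Filter ContinuousLinearMap MeasureTheory

lemma aux_int_Iic (h h' : ℝ → ℝ) (hpos : ∀ t, 0 < h t)
    (hd : ∀ t, HasDerivAt h (h' t) t) (hc : Continuous h') (hnn : ∀ t, 0 ≤ h' t)
    (hbot : Tendsto h atBot (nhds 0)) {c : ℝ} (hc0 : 0 < c) (t : ℝ) :
    IntegrableOn (fun τ => h τ ^ (c - 1) * h' τ) (Set.Iic t) ∧
      ∫ τ in Set.Iic t, h τ ^ (c - 1) * h' τ = h t ^ c / c := by
  have hΦd : ∀ τ : ℝ, HasDerivAt (fun s => h s ^ c / c) (h τ ^ (c - 1) * h' τ) τ := by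
    intro τ
    have h1 : HasDerivAt (fun s => h s ^ c) (h' τ * c * h τ ^ (c - 1)) τ :=
      (hd τ).rpow_const (Or.inl (hpos τ).ne')
    have := h1.div_const c
    refine this.congr_deriv ?_
    rw [div_eq_iff hc0.ne']
    ring
  have hcontφ : Continuous fun τ => h τ ^ (c - 1) * h' τ := by
    have hch : Continuous h := continuous_iff_continuousAt.mpr fun τ => (hd τ).continuousAt
    exact (hch.rpow_const fun τ => Or.inl (hpos τ).ne').mul hc
  have hΦtend : Tendsto (fun s => h s ^ c / c) atBot (nhds 0) := by
    have h1 : ContinuousAt (fun x : ℝ => x ^ c) 0 :=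
      Real.continuousAt_rpow_const 0 c (Or.inr hc0.le)
    have h2 : Tendsto (fun s => h s ^ c) atBot (nhds ((0:ℝ) ^ c)) := (h1.tendsto).comp hbot
    rw [Real.zero_rpow hc0.ne'] at h2
    simpa using h2.div_const c
  have hΦnn : ∀ s, 0 ≤ h s ^ c / c := fun s =>
    div_nonneg (Real.rpow_nonneg (hpos s).le c) hc0.le
  have hint : IntegrableOn (fun τ => h τ ^ (c - 1) * h' τ) (Set.Iic t) := by
    apply integrableOn_Iic_of_intervalIntegral_norm_bounded (h t ^ c / c) t
      (fun s => hcontφ.integrableOn_Ioc) tendsto_id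
    filter_upwards [eventually_le_atBot t] with s hs
    have hnorm : (∫ x in s..t, ‖h x ^ (c - 1) * h' x‖) = ∫ x in s..t, h x ^ (c - 1) * h' x := by
      apply intervalIntegral.integral_congr
      intro x _
      exact abs_of_nonneg (mul_nonneg (Real.rpow_nonneg (hpos x).le _) (hnn x))
    rw [show (id s : ℝ) = s from rfl, hnorm,
      intervalIntegral.integral_eq_sub_of_hasDerivAt (fun x _ => hΦd x)
      (hcontφ.intervalIntegrable s t)]
    have := hΦnn s
    linarith
  refine ⟨hint, ?_⟩
  rw [integral_Iic_of_hasDerivAt_of_tendsto' (fun x _ => hΦd x) hint hΦtend]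
  ring

lemma aux_int_Ioi (k k' : ℝ → ℝ) (kpos : ∀ t, 0 < k t)
    (kd : ∀ t, HasDerivAt k (k' t) t) (knn : ∀ t, 0 ≤ k' t)
    (ktop : Tendsto k atTop atTop) {c : ℝ} (hc0 : 0 < c) (t : ℝ) :
    IntegrableOn (fun τ => k τ ^ (-c - 1) * k' τ) (Set.Ioi t) ∧
      ∫ τ in Set.Ioi t, k τ ^ (-c - 1) * k' τ = k t ^ (-c) / c := by
  have hΨd : ∀ τ : ℝ, HasDerivAt (fun s => -(k s ^ (-c) / c)) (k τ ^ (-c - 1) * k' τ) τ := by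
    intro τ
    have h1 : HasDerivAt (fun s => k s ^ (-c)) (k' τ * (-c) * k τ ^ (-c - 1)) τ :=
      (kd τ).rpow_const (Or.inl (kpos τ).ne')
    have := (h1.div_const c).neg
    refine this.congr_deriv ?_
    rw [neg_div', div_eq_iff hc0.ne']
    ring
  have hΨtend : Tendsto (fun s => -(k s ^ (-c) / c)) atTop (nhds 0) := by
    have h2 : Tendsto (fun s => k s ^ (-c)) atTop (nhds 0) :=
      (tendsto_rpow_neg_atTop hc0).comp ktop
    simpa using (h2.div_const c).neg
  have hnnd : ∀ x ∈ Set.Ioi t, 0 ≤ k x ^ (-c - 1) * k' x := fun x _ =>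
    mul_nonneg (Real.rpow_nonneg (kpos x).le _) (knn x)
  have hint : IntegrableOn (fun τ => k τ ^ (-c - 1) * k' τ) (Set.Ioi t) :=
    integrableOn_Ioi_deriv_of_nonneg' (fun x _ => hΨd x) hnnd hΨtend
  refine ⟨hint, ?_⟩
  rw [integral_Ioi_of_hasDerivAt_of_nonneg' (fun x _ => hΨd x) hnnd hΨtend]
  ring

set_option maxHeartbeats 1600000 in
/-- Lemma `leldh`: the operator `J` maps the ball `Ω₃` of continuous functions
bounded by `Kα(1/|a|+1/b)` into itself, is a contraction with constant
`Kγ(1/|a|+1/b)`, and hence has a unique fixed point in `Ω₃`. -/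
theorem stmt_13 {X : Type*} [NormedAddCommGroup X] [NormedSpace ℝ X] [CompleteSpace X]
    (h k μ ν : ℝ → ℝ) (h' k' : ℝ → ℝ)
    (hmono : Monotone h) (hpos : ∀ t, 0 < h t) (h0 : h 0 = 1)
    (htop : Tendsto h atTop atTop) (hbot : Tendsto h atBot (nhds 0))
    (kmono : Monotone k) (kpos : ∀ t, 0 < k t) (k0 : k 0 = 1)
    (ktop : Tendsto k atTop atTop) (kbot : Tendsto k atBot (nhds 0))
    (μmono : Monotone μ) (μpos : ∀ t, 0 < μ t) (μ0 : μ 0 = 1)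
    (μtop : Tendsto μ atTop atTop) (μbot : Tendsto μ atBot (nhds 0))
    (νmono : Monotone ν) (νpos : ∀ t, 0 < ν t) (ν0 : ν 0 = 1)
    (νtop : Tendsto ν atTop atTop) (νbot : Tendsto ν atBot (nhds 0))
    (hd : ∀ t, HasDerivAt h (h' t) t) (kd : ∀ t, HasDerivAt k (k' t) t)
    (hc : Continuous h') (kc : Continuous k')
    (hnn : ∀ t, 0 ≤ h' t) (knn : ∀ t, 0 ≤ k' t)
    (K a b ε α γ : ℝ) (ha : a < 0) (hb : 0 < b) (hε : 0 ≤ ε) (hK : 0 < K)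
    (hα : 0 < α) (hγ : 0 < γ)
    (A : ℝ → X →L[ℝ] X) (hA : Continuous A)
    (T : ℝ → ℝ → X →L[ℝ] X)
    (hTid : ∀ t, T t t = ContinuousLinearMap.id ℝ X)
    (hTderiv : ∀ (s : ℝ) (x : X), ∀ t, HasDerivAt (fun r => T r s x) (A t (T t s x)) t)
    (hTcont : Continuous fun p : ℝ × ℝ => T p.1 p.2)
    (P : ℝ → X →L[ℝ] X) (hPcont : Continuous P)
    (hproj : ∀ t, P t ∘L P t = P t)
    (hcomm : ∀ t s, P t ∘L T t s = T t s ∘L P s)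
    (hbound₁ : ∀ t s, s ≤ t →
      ‖T t s ∘L P s‖ ≤ K * (h t / h s) ^ a * μ |s| ^ ε)
    (hbound₂ : ∀ t s, t ≤ s →
      ‖T t s ∘L (ContinuousLinearMap.id ℝ X - P s)‖ ≤ K * (k s / k t) ^ (-b) * ν |s| ^ ε)
    (f : ℝ → X → X) (hfcont : Continuous fun p : ℝ × X => f p.1 p.2)
    (hfbd : ∀ t x, ‖f t x‖ ≤
      α * min (h' t * (h t)⁻¹ * μ |t| ^ (-ε)) (k' t * (k t)⁻¹ * ν |t| ^ (-ε)))
    (hflip : ∀ t x₁ x₂, ‖f t x₁ - f t x₂‖ ≤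
      γ * min (h' t * (h t)⁻¹ * μ |t| ^ (-ε)) (k' t * (k t)⁻¹ * ν |t| ^ (-ε)) * ‖x₁ - x₂‖)
    (hsmall : K * γ * (1 / |a| + 1 / b) < 1)
    (Ys : ℝ → X) (hYs : ∀ t, HasDerivAt Ys (A t (Ys t)) t)
    (J : (ℝ → X) → ℝ → X)
    (hJ : ∀ (z : ℝ → X) (t : ℝ),
      J z t = (∫ τ in Set.Iic t, (T t τ ∘L P τ) (f τ (Ys τ + z τ)))
        - ∫ τ in Set.Ioi t, (T t τ ∘L (ContinuousLinearMap.id ℝ X - P τ)) (f τ (Ys τ + z τ))) :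
    -- `J` maps `Ω₃` into itself
    (∀ z : ℝ → X, Continuous z → (∀ t, ‖z t‖ ≤ K * α * (1 / |a| + 1 / b)) →
      ∀ t, ‖J z t‖ ≤ K * α * (1 / |a| + 1 / b)) ∧
    -- `J` is a contraction with constant `Kγ(1/|a|+1/b)` in the sup norm
    (∀ z₁ z₂ : ℝ → X, Continuous z₁ → Continuous z₂ →
      (∀ t, ‖z₁ t‖ ≤ K * α * (1 / |a| + 1 / b)) →
      (∀ t, ‖z₂ t‖ ≤ K * α * (1 / |a| + 1 / b)) →
      ∀ C : ℝ, (∀ t, ‖z₁ t - z₂ t‖ ≤ C) →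
        ∀ t, ‖J z₁ t - J z₂ t‖ ≤ K * γ * (1 / |a| + 1 / b) * C) ∧
    -- unique fixed point in `Ω₃`
    (∃ l : ℝ → X, Continuous l ∧ (∀ t, ‖l t‖ ≤ K * α * (1 / |a| + 1 / b)) ∧
      (∀ t, J l t = l t) ∧
      ∀ l' : ℝ → X, Continuous l' → (∀ t, ‖l' t‖ ≤ K * α * (1 / |a| + 1 / b)) →
        (∀ t, J l' t = l' t) → l' = l) := by

  have hia : (0:ℝ) < |a| := abs_pos.mpr ha.ne
  have hiaeq : |a| = -a := abs_of_neg ha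
  have hna : (0:ℝ) < -a := by linarith
  have hsum : (0:ℝ) < 1 / |a| + 1 / b := by positivity
  have hconth : Continuous h := continuous_iff_continuousAt.mpr fun τ => (hd τ).continuousAt
  have hcontk : Continuous k := continuous_iff_continuousAt.mpr fun τ => (kd τ).continuousAt
  have hYsc : Continuous Ys := continuous_iff_continuousAt.mpr fun τ => (hYs τ).continuousAt
  -- continuity of the integrands
  have meas₁ : ∀ (t : ℝ) (w : ℝ → X), Continuous w →
      Continuous (fun τ => (T t τ ∘L P τ) (w τ)) := by
    intro t w hw
    simp only [ContinuousLinearMap.comp_apply]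
    exact (hTcont.comp (continuous_const.prodMk continuous_id)).clm_apply (hPcont.clm_apply hw)
  have meas₂ : ∀ (t : ℝ) (w : ℝ → X), Continuous w →
      Continuous (fun τ => (T t τ ∘L (ContinuousLinearMap.id ℝ X - P τ)) (w τ)) := by
    intro t w hw
    simp only [ContinuousLinearMap.comp_apply]
    exact (hTcont.comp (continuous_const.prodMk continuous_id)).clm_apply
      ((continuous_const.sub hPcont).clm_apply hw)
  -- pointwise operator bounds
  have opb₁ : ∀ (t τ : ℝ), τ ≤ t → ∀ (c : ℝ), 0 ≤ c → ∀ (v : X),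
      ‖v‖ ≤ c * (h' τ * (h τ)⁻¹ * μ |τ| ^ (-ε)) →
      ‖(T t τ ∘L P τ) v‖ ≤ K * c * h t ^ a * (h τ ^ (-a - 1) * h' τ) := by
    intro t τ hτ c hc v hv
    have hop : (0:ℝ) ≤ K * (h t / h τ) ^ a * μ |τ| ^ ε :=
      mul_nonneg (mul_nonneg hK.le
        (Real.rpow_nonneg (div_nonneg (hpos t).le (hpos τ).le) a))
        (Real.rpow_nonneg (μpos _).le ε)
    calc ‖(T t τ ∘L P τ) v‖ ≤ ‖T t τ ∘L P τ‖ * ‖v‖ := le_opNorm _ _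
      _ ≤ (K * (h t / h τ) ^ a * μ |τ| ^ ε) *
          (c * (h' τ * (h τ)⁻¹ * μ |τ| ^ (-ε))) :=
        mul_le_mul (hbound₁ t τ hτ) hv (norm_nonneg v) hop
      _ = K * c * h t ^ a * (h τ ^ (-a - 1) * h' τ) := by
        have e1 : (h t / h τ) ^ a = h t ^ a / h τ ^ a :=
          Real.div_rpow (hpos t).le (hpos τ).le a
        have e2 : h τ ^ (-a - 1) = (h τ ^ a)⁻¹ * (h τ)⁻¹ := by
          rw [show (-a - 1 : ℝ) = -a + -1 by ring, Real.rpow_add (hpos τ),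
            Real.rpow_neg (hpos τ).le, Real.rpow_neg_one]
        have e3 : μ |τ| ^ (-ε) = (μ |τ| ^ ε)⁻¹ := Real.rpow_neg (μpos _).le ε
        have hμne : μ |τ| ^ ε ≠ 0 := (Real.rpow_pos_of_pos (μpos _) ε).ne'
        have hhne : h τ ^ a ≠ 0 := (Real.rpow_pos_of_pos (hpos τ) a).ne'
        have hne : h τ ≠ 0 := (hpos τ).ne'
        rw [e1, e2, e3]
        field_simp
  have opb₂ : ∀ (t τ : ℝ), t ≤ τ → ∀ (c : ℝ), 0 ≤ c → ∀ (v : X),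
      ‖v‖ ≤ c * (k' τ * (k τ)⁻¹ * ν |τ| ^ (-ε)) →
      ‖(T t τ ∘L (ContinuousLinearMap.id ℝ X - P τ)) v‖ ≤
        K * c * k t ^ b * (k τ ^ (-b - 1) * k' τ) := by
    intro t τ hτ c hc v hv
    have hop : (0:ℝ) ≤ K * (k τ / k t) ^ (-b) * ν |τ| ^ ε :=
      mul_nonneg (mul_nonneg hK.le
        (Real.rpow_nonneg (div_nonneg (kpos τ).le (kpos t).le) _))
        (Real.rpow_nonneg (νpos _).le ε)
    calc ‖(T t τ ∘L (ContinuousLinearMap.id ℝ X - P τ)) v‖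
        ≤ ‖T t τ ∘L (ContinuousLinearMap.id ℝ X - P τ)‖ * ‖v‖ := le_opNorm _ _
      _ ≤ (K * (k τ / k t) ^ (-b) * ν |τ| ^ ε) *
          (c * (k' τ * (k τ)⁻¹ * ν |τ| ^ (-ε))) :=
        mul_le_mul (hbound₂ t τ hτ) hv (norm_nonneg v) hop
      _ = K * c * k t ^ b * (k τ ^ (-b - 1) * k' τ) := by
        have e1 : (k τ / k t) ^ (-b) = k τ ^ (-b) / k t ^ (-b) :=
          Real.div_rpow (kpos τ).le (kpos t).le _
        have e2 : k τ ^ (-b - 1) = (k τ ^ b)⁻¹ * (k τ)⁻¹ := by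
          rw [show (-b - 1 : ℝ) = -b + -1 by ring, Real.rpow_add (kpos τ),
            Real.rpow_neg (kpos τ).le, Real.rpow_neg_one]
        have e2' : k τ ^ (-b) = (k τ ^ b)⁻¹ := Real.rpow_neg (kpos τ).le b
        have e2'' : k t ^ (-b) = (k t ^ b)⁻¹ := Real.rpow_neg (kpos t).le b
        have e3' : ν |τ| ^ (-ε) = (ν |τ| ^ ε)⁻¹ := Real.rpow_neg (νpos _).le ε
        have hνne : ν |τ| ^ ε ≠ 0 := (Real.rpow_pos_of_pos (νpos _) ε).ne'
        have hkne : k τ ^ b ≠ 0 := (Real.rpow_pos_of_pos (kpos τ) b).ne'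
        have hktne : k t ^ b ≠ 0 := (Real.rpow_pos_of_pos (kpos t) b).ne'
        have hne : k τ ≠ 0 := (kpos τ).ne'
        rw [e1, e2, e2', e2'', e3']
        field_simp
  -- the master estimate
  have key : ∀ (w : ℝ → X), Continuous w → ∀ c : ℝ, 0 ≤ c →
      (∀ τ, ‖w τ‖ ≤ c * min (h' τ * (h τ)⁻¹ * μ |τ| ^ (-ε))
        (k' τ * (k τ)⁻¹ * ν |τ| ^ (-ε))) →
      ∀ t, IntegrableOn (fun τ => (T t τ ∘L P τ) (w τ)) (Set.Iic t) ∧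
        IntegrableOn (fun τ => (T t τ ∘L (ContinuousLinearMap.id ℝ X - P τ)) (w τ))
          (Set.Ioi t) ∧
        ‖(∫ τ in Set.Iic t, (T t τ ∘L P τ) (w τ)) -
          ∫ τ in Set.Ioi t, (T t τ ∘L (ContinuousLinearMap.id ℝ X - P τ)) (w τ)‖ ≤
          K * c * (1 / |a| + 1 / b) := by
    intro w hw c hcnn hwb t
    obtain ⟨int1, val1⟩ := aux_int_Iic h h' hpos hd hc hnn hbot hna t
    obtain ⟨int2, val2⟩ := aux_int_Ioi k k' kpos kd knn ktop hb t
    have hwb1 : ∀ τ, ‖w τ‖ ≤ c * (h' τ * (h τ)⁻¹ * μ |τ| ^ (-ε)) := fun τ =>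
      (hwb τ).trans (mul_le_mul_of_nonneg_left (min_le_left _ _) hcnn)
    have hwb2 : ∀ τ, ‖w τ‖ ≤ c * (k' τ * (k τ)⁻¹ * ν |τ| ^ (-ε)) := fun τ =>
      (hwb τ).trans (mul_le_mul_of_nonneg_left (min_le_right _ _) hcnn)
    have hbd1 : ∀ τ ∈ Set.Iic t, ‖(T t τ ∘L P τ) (w τ)‖ ≤
        K * c * h t ^ a * (h τ ^ (-a - 1) * h' τ) := fun τ hτ =>
      opb₁ t τ hτ c hcnn _ (hwb1 τ)
    have hbd2 : ∀ τ ∈ Set.Ioi t,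
        ‖(T t τ ∘L (ContinuousLinearMap.id ℝ X - P τ)) (w τ)‖ ≤
        K * c * k t ^ b * (k τ ^ (-b - 1) * k' τ) := fun τ hτ =>
      opb₂ t τ (le_of_lt hτ) c hcnn _ (hwb2 τ)
    have dom1 : IntegrableOn
        (fun τ => K * c * h t ^ a * (h τ ^ (-a - 1) * h' τ)) (Set.Iic t) :=
      int1.const_mul _
    have dom2 : IntegrableOn
        (fun τ => K * c * k t ^ b * (k τ ^ (-b - 1) * k' τ)) (Set.Ioi t) :=
      int2.const_mul _
    have I1 : IntegrableOn (fun τ => (T t τ ∘L P τ) (w τ)) (Set.Iic t) :=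
      Integrable.mono' dom1 ((meas₁ t w hw).aestronglyMeasurable)
        ((ae_restrict_iff' measurableSet_Iic).mpr (ae_of_all _ hbd1))
    have I2 : IntegrableOn
        (fun τ => (T t τ ∘L (ContinuousLinearMap.id ℝ X - P τ)) (w τ)) (Set.Ioi t) :=
      Integrable.mono' dom2 ((meas₂ t w hw).aestronglyMeasurable)
        ((ae_restrict_iff' measurableSet_Ioi).mpr (ae_of_all _ hbd2))
    refine ⟨I1, I2, ?_⟩
    have hpow1 : h t ^ a * h t ^ (-a) = 1 := by
      rw [← Real.rpow_add (hpos t)]; simp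
    have hpow2 : k t ^ b * k t ^ (-b) = 1 := by
      rw [← Real.rpow_add (kpos t)]; simp
    have n1 : ‖∫ τ in Set.Iic t, (T t τ ∘L P τ) (w τ)‖ ≤ K * c / (-a) := by
      have := norm_integral_le_of_norm_le dom1
        ((ae_restrict_iff' measurableSet_Iic).mpr (ae_of_all _ hbd1))
      rw [integral_const_mul, val1] at this
      calc ‖∫ τ in Set.Iic t, (T t τ ∘L P τ) (w τ)‖
          ≤ K * c * h t ^ a * (h t ^ (-a) / (-a)) := this
        _ = K * c * (h t ^ a * h t ^ (-a)) / (-a) := by ring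
        _ = K * c / (-a) := by rw [hpow1, mul_one]
    have n2 : ‖∫ τ in Set.Ioi t,
        (T t τ ∘L (ContinuousLinearMap.id ℝ X - P τ)) (w τ)‖ ≤ K * c / b := by
      have := norm_integral_le_of_norm_le dom2
        ((ae_restrict_iff' measurableSet_Ioi).mpr (ae_of_all _ hbd2))
      rw [integral_const_mul, val2] at this
      calc ‖∫ τ in Set.Ioi t, (T t τ ∘L (ContinuousLinearMap.id ℝ X - P τ)) (w τ)‖
          ≤ K * c * k t ^ b * (k t ^ (-b) / b) := this
        _ = K * c * (k t ^ b * k t ^ (-b)) / b := by ring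
        _ = K * c / b := by rw [hpow2, mul_one]
    have : K * c * (1 / |a| + 1 / b) = K * c / (-a) + K * c / b := by
      rw [hiaeq]; ring
    calc ‖(∫ τ in Set.Iic t, (T t τ ∘L P τ) (w τ)) -
        ∫ τ in Set.Ioi t, (T t τ ∘L (ContinuousLinearMap.id ℝ X - P τ)) (w τ)‖
        ≤ ‖∫ τ in Set.Iic t, (T t τ ∘L P τ) (w τ)‖ +
          ‖∫ τ in Set.Ioi t, (T t τ ∘L (ContinuousLinearMap.id ℝ X - P τ)) (w τ)‖ :=
        norm_sub_le _ _
      _ ≤ K * c * (1 / |a| + 1 / b) := by rw [this]; linarith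
  -- part 1 : self-map
  have part1 : ∀ z : ℝ → X, Continuous z → (∀ t, ‖z t‖ ≤ K * α * (1 / |a| + 1 / b)) →
      ∀ t, ‖J z t‖ ≤ K * α * (1 / |a| + 1 / b) := by
    intro z hz _ t
    rw [hJ]
    have hwc : Continuous fun τ => f τ (Ys τ + z τ) :=
      hfcont.comp (continuous_id.prodMk (hYsc.add hz))
    exact (key _ hwc α hα.le (fun τ => hfbd τ _) t).2.2
  -- part 2 : contraction estimate
  have part2 : ∀ z₁ z₂ : ℝ → X, Continuous z₁ → Continuous z₂ →
      (∀ t, ‖z₁ t‖ ≤ K * α * (1 / |a| + 1 / b)) →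
      (∀ t, ‖z₂ t‖ ≤ K * α * (1 / |a| + 1 / b)) →
      ∀ C : ℝ, (∀ t, ‖z₁ t - z₂ t‖ ≤ C) →
      ∀ t, ‖J z₁ t - J z₂ t‖ ≤ K * γ * (1 / |a| + 1 / b) * C := by
    intro z₁ z₂ hz₁ hz₂ hb₁ hb₂ C hC t
    have hC0 : 0 ≤ C := le_trans (norm_nonneg _) (hC 0)
    have hw₁c : Continuous fun τ => f τ (Ys τ + z₁ τ) :=
      hfcont.comp (continuous_id.prodMk (hYsc.add hz₁))
    have hw₂c : Continuous fun τ => f τ (Ys τ + z₂ τ) :=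
      hfcont.comp (continuous_id.prodMk (hYsc.add hz₂))
    obtain ⟨I1a, I2a, -⟩ := key _ hw₁c α hα.le (fun τ => hfbd τ _) t
    obtain ⟨I1b, I2b, -⟩ := key _ hw₂c α hα.le (fun τ => hfbd τ _) t
    have minnn : ∀ τ : ℝ, 0 ≤ min (h' τ * (h τ)⁻¹ * μ |τ| ^ (-ε))
        (k' τ * (k τ)⁻¹ * ν |τ| ^ (-ε)) := by
      intro τ
      apply le_min
      · exact mul_nonneg (mul_nonneg (hnn τ) (inv_nonneg.mpr (hpos τ).le))
          (Real.rpow_nonneg (μpos _).le _)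
      · exact mul_nonneg (mul_nonneg (knn τ) (inv_nonneg.mpr (kpos τ).le))
          (Real.rpow_nonneg (νpos _).le _)
    have hwdb : ∀ τ, ‖(f τ (Ys τ + z₁ τ)) - (f τ (Ys τ + z₂ τ))‖ ≤
        (γ * C) * min (h' τ * (h τ)⁻¹ * μ |τ| ^ (-ε))
          (k' τ * (k τ)⁻¹ * ν |τ| ^ (-ε)) := by
      intro τ
      have h1 := hflip τ (Ys τ + z₁ τ) (Ys τ + z₂ τ)
      have h2 : Ys τ + z₁ τ - (Ys τ + z₂ τ) = z₁ τ - z₂ τ := by abel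
      rw [h2] at h1
      refine h1.trans ?_
      have := mul_le_mul_of_nonneg_left (hC τ)
        (mul_nonneg hγ.le (minnn τ))
      calc γ * min (h' τ * (h τ)⁻¹ * μ |τ| ^ (-ε))
            (k' τ * (k τ)⁻¹ * ν |τ| ^ (-ε)) * ‖z₁ τ - z₂ τ‖
          ≤ γ * min (h' τ * (h τ)⁻¹ * μ |τ| ^ (-ε))
            (k' τ * (k τ)⁻¹ * ν |τ| ^ (-ε)) * C := by
            exact mul_le_mul_of_nonneg_left (hC τ) (mul_nonneg hγ.le (minnn τ))
        _ = (γ * C) * min (h' τ * (h τ)⁻¹ * μ |τ| ^ (-ε))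
            (k' τ * (k τ)⁻¹ * ν |τ| ^ (-ε)) := by ring
    have hwd : Continuous fun τ => (f τ (Ys τ + z₁ τ)) - (f τ (Ys τ + z₂ τ)) :=
      hw₁c.sub hw₂c
    obtain ⟨-, -, hkey⟩ := key _ hwd (γ * C) (mul_nonneg hγ.le hC0) hwdb t
    rw [hJ z₁, hJ z₂, sub_sub_sub_comm]
    have e1 : (∫ τ in Set.Iic t, (T t τ ∘L P τ) (f τ (Ys τ + z₁ τ))) -
        ∫ τ in Set.Iic t, (T t τ ∘L P τ) (f τ (Ys τ + z₂ τ)) =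
        ∫ τ in Set.Iic t, (T t τ ∘L P τ)
          ((f τ (Ys τ + z₁ τ)) - (f τ (Ys τ + z₂ τ))) := by
      rw [← integral_sub I1a I1b]
      exact integral_congr_ae (ae_of_all _ fun τ => (map_sub _ _ _).symm)
    have e2 : (∫ τ in Set.Ioi t, (T t τ ∘L (ContinuousLinearMap.id ℝ X - P τ))
          (f τ (Ys τ + z₁ τ))) -
        ∫ τ in Set.Ioi t, (T t τ ∘L (ContinuousLinearMap.id ℝ X - P τ))
          (f τ (Ys τ + z₂ τ)) =
        ∫ τ in Set.Ioi t, (T t τ ∘L (ContinuousLinearMap.id ℝ X - P τ))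
          ((f τ (Ys τ + z₁ τ)) - (f τ (Ys τ + z₂ τ))) := by
      rw [← integral_sub I2a I2b]
      exact integral_congr_ae (ae_of_all _ fun τ => (map_sub _ _ _).symm)
    rw [e1, e2]
    refine hkey.trans (le_of_eq (by ring))
  -- continuity of `J z`
  have contJ : ∀ z : ℝ → X, Continuous z → Continuous (J z) := by
    intro z hz
    have hwc : Continuous fun τ => f τ (Ys τ + z τ) :=
      hfcont.comp (continuous_id.prodMk (hYsc.add hz))
    set w : ℝ → X := fun τ => f τ (Ys τ + z τ) with hwdef
    have hwb : ∀ τ, ‖w τ‖ ≤ α * min (h' τ * (h τ)⁻¹ * μ |τ| ^ (-ε))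
        (k' τ * (k τ)⁻¹ * ν |τ| ^ (-ε)) := fun τ => hfbd τ _
    have hwb1 : ∀ τ, ‖w τ‖ ≤ α * (h' τ * (h τ)⁻¹ * μ |τ| ^ (-ε)) := fun τ =>
      (hwb τ).trans (mul_le_mul_of_nonneg_left (min_le_left _ _) hα.le)
    have hwb2 : ∀ τ, ‖w τ‖ ≤ α * (k' τ * (k τ)⁻¹ * ν |τ| ^ (-ε)) := fun τ =>
      (hwb τ).trans (mul_le_mul_of_nonneg_left (min_le_right _ _) hα.le)
    have hF1 : Continuous fun t => ∫ τ in Set.Iic t, (T t τ ∘L P τ) (w τ) := by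
      have e : (fun t => ∫ τ in Set.Iic t, (T t τ ∘L P τ) (w τ)) =
          fun t => ∫ τ, (Set.Iic t).indicator
            (fun τ => (T t τ ∘L P τ) (w τ)) τ :=
        funext fun t => (integral_indicator measurableSet_Iic).symm
      rw [e]
      refine continuous_iff_continuousAt.mpr fun t₀ => ?_
      have hane : {τ : ℝ | ¬ τ ≠ t₀} = {t₀} := by ext τ; simp
      have hae : ∀ᵐ (τ : ℝ), τ ≠ t₀ := by
        rw [ae_iff, hane]; exact measure_singleton t₀
      apply continuousAt_of_dominated (bound := fun τ => (Set.Iic (t₀ + 1)).indicator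
        (fun τ => K * α * h (t₀ - 1) ^ a * (h τ ^ (-a - 1) * h' τ)) τ)
      · exact Eventually.of_forall fun t =>
          ((meas₁ t w hwc).aestronglyMeasurable).indicator measurableSet_Iic
      · filter_upwards [Icc_mem_nhds (by linarith : t₀ - 1 < t₀)
          (by linarith : t₀ < t₀ + 1)] with t ht
        refine ae_of_all _ fun τ => ?_
        by_cases hτ : τ ∈ Set.Iic t
        · rw [Set.indicator_of_mem hτ,
            Set.indicator_of_mem (show τ ∈ Set.Iic (t₀ + 1) from hτ.trans ht.2)]
          refine (opb₁ t τ hτ α hα.le _ (hwb1 τ)).trans ?_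
          have h2 : h t ^ a ≤ h (t₀ - 1) ^ a :=
            Real.rpow_le_rpow_of_nonpos (hpos _) (hmono ht.1) ha.le
          exact mul_le_mul_of_nonneg_right
            (mul_le_mul_of_nonneg_left h2 (by positivity))
            (mul_nonneg (Real.rpow_nonneg (hpos τ).le _) (hnn τ))
        · rw [Set.indicator_of_notMem hτ, norm_zero]
          exact Set.indicator_nonneg (fun τ _ => mul_nonneg
            (mul_nonneg (mul_nonneg hK.le hα.le) (Real.rpow_nonneg (hpos _).le _))
            (mul_nonneg (Real.rpow_nonneg (hpos τ).le _) (hnn τ))) τ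
      · rw [integrable_indicator_iff measurableSet_Iic]
        exact (aux_int_Iic h h' hpos hd hc hnn hbot hna (t₀ + 1)).1.const_mul _
      · filter_upwards [hae] with τ hτ
        have hcontt : ContinuousAt (fun t => (T t τ ∘L P τ) (w τ)) t₀ := by
          have : Continuous fun t => (T t τ) ((P τ) (w τ)) :=
            (hTcont.comp (continuous_id.prodMk continuous_const)).clm_apply
              continuous_const
          simpa [ContinuousLinearMap.comp_apply] using this.continuousAt
        rcases lt_or_gt_of_ne hτ with hlt | hgt
        · refine hcontt.congr ?_
          filter_upwards [Ioi_mem_nhds hlt] with t ht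
          exact (Set.indicator_of_mem
            (show τ ∈ Set.Iic t from Set.mem_Iic.mpr (le_of_lt (Set.mem_Ioi.mp ht)))
            (fun τ => (T t τ ∘L P τ) (w τ))).symm
        · have hev : (fun t => (Set.Iic t).indicator
              (fun τ => (T t τ ∘L P τ) (w τ)) τ) =ᶠ[nhds t₀] fun _ => (0:X) := by
            filter_upwards [Iio_mem_nhds hgt] with t ht
            exact Set.indicator_of_notMem
              (show τ ∉ Set.Iic t from fun hm => absurd (Set.mem_Iic.mp hm)
                (not_le.mpr (Set.mem_Iio.mp ht)))
              (fun τ => (T t τ ∘L P τ) (w τ))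
          exact hev.continuousAt
    have hF2 : Continuous fun t => ∫ τ in Set.Ioi t,
        (T t τ ∘L (ContinuousLinearMap.id ℝ X - P τ)) (w τ) := by
      have e : (fun t => ∫ τ in Set.Ioi t,
          (T t τ ∘L (ContinuousLinearMap.id ℝ X - P τ)) (w τ)) =
          fun t => ∫ τ, (Set.Ioi t).indicator
            (fun τ => (T t τ ∘L (ContinuousLinearMap.id ℝ X - P τ)) (w τ)) τ :=
        funext fun t => (integral_indicator measurableSet_Ioi).symm
      rw [e]
      refine continuous_iff_continuousAt.mpr fun t₀ => ?_
      have hane : {τ : ℝ | ¬ τ ≠ t₀} = {t₀} := by ext τ; simp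
      have hae : ∀ᵐ (τ : ℝ), τ ≠ t₀ := by
        rw [ae_iff, hane]; exact measure_singleton t₀
      apply continuousAt_of_dominated (bound := fun τ => (Set.Ioi (t₀ - 1)).indicator
        (fun τ => K * α * k (t₀ + 1) ^ b * (k τ ^ (-b - 1) * k' τ)) τ)
      · exact Eventually.of_forall fun t =>
          ((meas₂ t w hwc).aestronglyMeasurable).indicator measurableSet_Ioi
      · filter_upwards [Icc_mem_nhds (by linarith : t₀ - 1 < t₀)
          (by linarith : t₀ < t₀ + 1)] with t ht
        refine ae_of_all _ fun τ => ?_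
        by_cases hτ : τ ∈ Set.Ioi t
        · rw [Set.indicator_of_mem hτ,
            Set.indicator_of_mem (show τ ∈ Set.Ioi (t₀ - 1) from lt_of_le_of_lt ht.1 hτ)]
          refine (opb₂ t τ (le_of_lt hτ) α hα.le _ (hwb2 τ)).trans ?_
          have h2 : k t ^ b ≤ k (t₀ + 1) ^ b :=
            Real.rpow_le_rpow (kpos _).le (kmono ht.2) hb.le
          exact mul_le_mul_of_nonneg_right
            (mul_le_mul_of_nonneg_left h2 (by positivity))
            (mul_nonneg (Real.rpow_nonneg (kpos τ).le _) (knn τ))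
        · rw [Set.indicator_of_notMem hτ, norm_zero]
          exact Set.indicator_nonneg (fun τ _ => mul_nonneg
            (mul_nonneg (mul_nonneg hK.le hα.le) (Real.rpow_nonneg (kpos _).le _))
            (mul_nonneg (Real.rpow_nonneg (kpos τ).le _) (knn τ))) τ
      · rw [integrable_indicator_iff measurableSet_Ioi]
        exact (aux_int_Ioi k k' kpos kd knn ktop hb (t₀ - 1)).1.const_mul _
      · filter_upwards [hae] with τ hτ
        have hcontt : ContinuousAt
            (fun t => (T t τ ∘L (ContinuousLinearMap.id ℝ X - P τ)) (w τ)) t₀ := by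
          have : Continuous fun t => (T t τ)
              ((ContinuousLinearMap.id ℝ X - P τ) (w τ)) :=
            (hTcont.comp (continuous_id.prodMk continuous_const)).clm_apply
              continuous_const
          simpa [ContinuousLinearMap.comp_apply] using this.continuousAt
        rcases lt_or_gt_of_ne hτ with hlt | hgt
        · have hev : (fun t => (Set.Ioi t).indicator
              (fun τ => (T t τ ∘L (ContinuousLinearMap.id ℝ X - P τ)) (w τ)) τ)
              =ᶠ[nhds t₀] fun _ => (0:X) := by
            filter_upwards [Ioi_mem_nhds hlt] with t ht
            exact Set.indicator_of_notMem
              (show τ ∉ Set.Ioi t from fun hm => absurd (Set.mem_Ioi.mp hm)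
                (not_lt.mpr (le_of_lt (Set.mem_Ioi.mp ht))))
              (fun τ => (T t τ ∘L (ContinuousLinearMap.id ℝ X - P τ)) (w τ))
          exact hev.continuousAt
        · refine hcontt.congr ?_
          filter_upwards [Iio_mem_nhds hgt] with t ht
          exact (Set.indicator_of_mem
            (show τ ∈ Set.Ioi t from Set.mem_Ioi.mpr (Set.mem_Iio.mp ht))
            (fun τ => (T t τ ∘L (ContinuousLinearMap.id ℝ X - P τ)) (w τ))).symm
    have : J z = fun t => (∫ τ in Set.Iic t, (T t τ ∘L P τ) (w τ)) -
        ∫ τ in Set.Ioi t, (T t τ ∘L (ContinuousLinearMap.id ℝ X - P τ)) (w τ) :=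
      funext fun t => hJ z t
    rw [this]
    exact hF1.sub hF2
  refine ⟨part1, part2, ?_⟩
  -- fixed point via the Banach contraction principle
  set R : ℝ := K * α * (1 / |a| + 1 / b) with hR
  set q : ℝ := K * γ * (1 / |a| + 1 / b) with hq
  have hR0 : 0 ≤ R := by positivity
  have hq0 : 0 ≤ q := by positivity
  have hq1 : q < 1 := hsmall
  set S : Set (BoundedContinuousFunction ℝ X) := Metric.closedBall 0 R with hS
  haveI : CompleteSpace S := Metric.isClosed_closedBall.completeSpace_coe
  haveI : Nonempty S := ⟨⟨0, Metric.mem_closedBall_self hR0⟩⟩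
  have memb : ∀ g : BoundedContinuousFunction ℝ X, g ∈ S → ∀ t, ‖g t‖ ≤ R := by
    intro g hg t
    have h1 : ‖g‖ ≤ R := by
      simpa [hS] using mem_closedBall_zero_iff.mp hg
    exact (BoundedContinuousFunction.norm_coe_le_norm g t).trans h1
  have hJb : ∀ g : S, ∀ t : ℝ, ‖J (g : BoundedContinuousFunction ℝ X) t‖ ≤ R :=
    fun g t => part1 _ (g : BoundedContinuousFunction ℝ X).continuous (memb _ g.2) t
  set Jm : S → S := fun g =>
    ⟨BoundedContinuousFunction.ofNormedAddCommGroup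
      (J (g : BoundedContinuousFunction ℝ X))
      (contJ _ (g : BoundedContinuousFunction ℝ X).continuous) R (hJb g),
      mem_closedBall_zero_iff.mpr
        ((BoundedContinuousFunction.norm_le hR0).mpr (hJb g))⟩ with hJm
  have hlip : ∀ g₁ g₂ : S, dist (Jm g₁) (Jm g₂) ≤ q * dist g₁ g₂ := by
    intro g₁ g₂
    rw [Subtype.dist_eq]
    have hd0 : 0 ≤ dist g₁ g₂ := dist_nonneg
    refine (BoundedContinuousFunction.dist_le (by positivity)).mpr fun t => ?_
    have hC : ∀ s, ‖(g₁ : BoundedContinuousFunction ℝ X) s -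
        (g₂ : BoundedContinuousFunction ℝ X) s‖ ≤ dist g₁ g₂ := by
      intro s
      rw [← dist_eq_norm]
      calc dist ((g₁ : BoundedContinuousFunction ℝ X) s)
            ((g₂ : BoundedContinuousFunction ℝ X) s) ≤
          dist (g₁ : BoundedContinuousFunction ℝ X)
            (g₂ : BoundedContinuousFunction ℝ X) :=
          BoundedContinuousFunction.dist_coe_le_dist s
        _ = dist g₁ g₂ := (Subtype.dist_eq g₁ g₂).symm
    have := part2 _ _ (g₁ : BoundedContinuousFunction ℝ X).continuous
      (g₂ : BoundedContinuousFunction ℝ X).continuous (memb _ g₁.2) (memb _ g₂.2)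
      (dist g₁ g₂) hC t
    rw [dist_eq_norm]
    simpa [hJm] using this
  have hcontr : ContractingWith ⟨q, hq0⟩ Jm := by
    constructor
    · exact_mod_cast hq1
    · exact LipschitzWith.of_dist_le_mul hlip
  let lfix : S := hcontr.fixedPoint Jm
  have hlfix : Jm lfix = lfix := hcontr.fixedPoint_isFixedPt
  set l : ℝ → X := fun t => (lfix : BoundedContinuousFunction ℝ X) t with hl
  have hlc : Continuous l := (lfix : BoundedContinuousFunction ℝ X).continuous
  have hlb : ∀ t, ‖l t‖ ≤ R := memb _ lfix.2
  have hlf : ∀ t, J l t = l t := by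
    intro t
    have h1 : ((Jm lfix : S) : BoundedContinuousFunction ℝ X) t =
        (lfix : BoundedContinuousFunction ℝ X) t := by rw [hlfix]
    simpa [hJm, hl] using h1
  refine ⟨l, hlc, hlb, hlf, ?_⟩
  intro l' hl'c hl'b hl'f
  have hstep : ∀ n : ℕ, ∀ t, ‖l' t - l t‖ ≤ q ^ n * (2 * R) := by
    intro n
    induction n with
    | zero =>
      intro t
      have := norm_sub_le (l' t) (l t)
      have h1 := hl'b t
      have h2 := hlb t
      simpa using this.trans (by linarith)
    | succ n ih =>
      intro t
      rw [← hl'f t, ← hlf t]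
      calc ‖J l' t - J l t‖ ≤ q * (q ^ n * (2 * R)) :=
          part2 l' l hl'c hlc hl'b hlb (q ^ n * (2 * R)) ih t
        _ = q ^ (n + 1) * (2 * R) := by ring
  funext t
  have htend : Tendsto (fun n : ℕ => q ^ n * (2 * R)) atTop (nhds 0) := by
    have h0 := (tendsto_pow_atTop_nhds_zero_of_lt_one hq0 hq1).mul_const (2 * R)
    rw [zero_mul] at h0
    exact h0
  have hle : ‖l' t - l t‖ ≤ 0 := ge_of_tendsto' htend fun n => hstep n t
  have := norm_le_zero_iff.mp hle
  exact sub_eq_zero.mp this
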